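/- Let q be an odd prime, s_q(x) = x^q − 1 and t_q(x) = x + x² + ⋯ + x^{q−1}. Then: (a) Res(s_q, s_q') = q^q; (b) Res(t_q, t_q') = −(q−1)^{q−3}; (c) Res(t_q, s_q) = q − 1, where Res denotes the resultant of polynomials over ℚ. -/

import Mathlib

open Polynomial

theorem stmt15 (q : ℕ) (hq : q.Prime) (hodd : Odd q)
    (sq tq : Polynomial ℂ)
    (hsq : sq = X ^ q - 1)
    (htq : tq = ∑ a ∈ Finset.Icc 1 (q - 1), X ^ a) :
    (sq.roots.map (fun z => (derivative sq).eval z)).prod = (q : ℂ) ^ q ∧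
    (tq.roots.map (fun z => (derivative tq).eval z)).prod = -((q : ℂ) - 1) ^ (q - 3) ∧
    (tq.roots.map (fun z => sq.eval z)).prod = (q : ℂ) - 1 := by
  have hq3 : 3 ≤ q := by
    have h2 := hq.two_le
    rcases Nat.lt_or_ge q 3 with h | h
    · have : q = 2 := by omega
      subst this
      simp [Nat.odd_iff] at hodd
    · exact h
  have hq0 : q ≠ 0 := by omega
  -- part (a)
  have hsqmonic : sq.Monic := by
    rw [hsq, ← C_1]; exact monic_X_pow_sub_C 1 hq0
  have hsqsplit : sq.Splits := IsAlgClosed.splits sq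
  have hsqdeg : sq.natDegree = q := by
    rw [hsq, ← C_1]; exact natDegree_X_pow_sub_C
  have hsqcard : Multiset.card sq.roots = q := by
    rw [splits_iff_card_roots.mp hsqsplit, hsqdeg]
  have hsqprod : sq.roots.prod = 1 := by
    have h := hsqsplit.coeff_zero_eq_prod_roots_of_monic hsqmonic
    rw [hsqdeg, hodd.neg_one_pow] at h
    have hc : sq.coeff 0 = -1 := by
      rw [hsq]; simp [coeff_X_pow]; omega
    rw [hc] at h
    linear_combination h
  have parta : (sq.roots.map (fun z => (derivative sq).eval z)).prod = (q : ℂ) ^ q := by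
    have hder : derivative sq = C (q : ℂ) * X ^ (q - 1) := by
      rw [hsq]; simp [derivative_X_pow]
    have : (sq.roots.map (fun z => (derivative sq).eval z)).prod
        = (sq.roots.map (fun z => (q : ℂ) * z ^ (q - 1))).prod := by
      congr 1; apply Multiset.map_congr rfl
      intro z _; rw [hder]; simp
    rw [this, Multiset.prod_map_mul]
    have h1 : (sq.roots.map (fun _ => (q : ℂ))).prod = (q : ℂ) ^ q := by
      rw [Multiset.map_const', Multiset.prod_replicate, hsqcard]
    have h2 : (sq.roots.map (fun z => z ^ (q - 1))).prod = 1 := by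
      rw [Multiset.prod_map_pow, Multiset.map_id', hsqprod, one_pow]
    rw [h1, h2, mul_one]
  -- setup for (b), (c)
  set S : ℂ[X] := ∑ i ∈ Finset.range (q - 1), X ^ i with hS
  have hgeom : (X - 1) * S = X ^ (q - 1) - 1 := by
    rw [hS, mul_comm]; exact geom_sum_mul X (q - 1)
  have hXm : (X - 1 : ℂ[X]).Monic := by rw [← C_1]; exact monic_X_sub_C 1
  have hpm : ((X : ℂ[X]) ^ (q - 1) - 1).Monic := by
    rw [← C_1]; exact monic_X_pow_sub_C 1 (by omega)
  have hSmonic : S.Monic := hXm.of_mul_monic_left (hgeom ▸ hpm)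
  have hSdeg : S.natDegree = q - 2 := by
    have h := hXm.natDegree_mul hSmonic
    rw [hgeom] at h
    have h1 : ((X : ℂ[X]) ^ (q - 1) - 1).natDegree = q - 1 := by
      rw [← C_1]; exact natDegree_X_pow_sub_C
    have h2 : (X - 1 : ℂ[X]).natDegree = 1 := by
      rw [← C_1]; exact natDegree_X_sub_C 1
    rw [h1, h2] at h; omega
  have hSsplit : S.Splits := IsAlgClosed.splits S
  have hScard : Multiset.card S.roots = q - 2 := by
    rw [splits_iff_card_roots.mp hSsplit, hSdeg]
  have hoddq2 : Odd (q - 2) := Nat.Odd.sub_even (by omega) hodd (by decide)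
  have hSc0 : S.coeff 0 = 1 := by
    rw [hS, finset_sum_coeff]
    simp only [coeff_X_pow]
    rw [Finset.sum_eq_single 0]
    · simp
    · intro b _ hb; simp [Ne.symm hb]
    · intro h; exact absurd (Finset.mem_range.mpr (by omega)) h
  -- roots of S satisfy z^(q-1) = 1
  have hroot1 : ∀ z ∈ S.roots, z ^ (q - 1) = 1 := by
    intro z hz
    have hz0 : S.eval z = 0 := (isRoot_of_mem_roots hz)
    have h := congrArg (eval z) hgeom
    simp [hz0] at h
    linear_combination -h
  have hSrprod : S.roots.prod = -1 := by
    have h := hSsplit.coeff_zero_eq_prod_roots_of_monic hSmonic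
    rw [hSdeg, hoddq2.neg_one_pow, hSc0] at h
    linear_combination h
  have hqc : ((q : ℂ) - 1) = ((q - 1 : ℕ) : ℂ) := by
    push_cast [Nat.cast_sub (by omega : 1 ≤ q)]; ring
  have hprod1 : (S.roots.map (fun z => 1 - z)).prod = (q : ℂ) - 1 := by
    have hfac := hSsplit.eq_prod_roots_of_monic hSmonic
    have h := congrArg (eval 1) hfac
    rw [eval_multiset_prod, Multiset.map_map] at h
    have hev : S.eval 1 = (q : ℂ) - 1 := by
      rw [hS, eval_finset_sum]
      simp [hqc]
    rw [hev] at h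
    rw [h]; congr 1
    apply Multiset.map_congr rfl
    intro z _; simp [Function.comp]
  have hprodm1 : (S.roots.map (fun z => z - 1)).prod = -((q : ℂ) - 1) := by
    have h : (S.roots.map (fun z => z - 1)).prod
        = (S.roots.map (fun z => (-1 : ℂ) * (1 - z))).prod := by
      congr 1; apply Multiset.map_congr rfl; intro z _; ring
    rw [h, Multiset.prod_map_mul, hprod1]
    rw [Multiset.map_const', Multiset.prod_replicate, hScard, hoddq2.neg_one_pow]
    ring
  -- tq = X * S
  have htqXS : tq = X * S := by
    have hIcc : Finset.Icc 1 (q - 1) = Finset.Ico 1 q := by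
      ext a; simp only [Finset.mem_Icc, Finset.mem_Ico]; omega
    rw [htq, hS, Finset.mul_sum, hIcc, Finset.sum_Ico_eq_sum_range]
    apply Finset.sum_congr rfl
    intro i _
    rw [pow_add, pow_one]
  have hStz : tq ≠ 0 := by
    rw [htqXS]
    exact mul_ne_zero X_ne_zero hSmonic.ne_zero
  have htqroots : tq.roots = 0 ::ₘ S.roots := by
    rw [htqXS, roots_mul (htqXS ▸ hStz), roots_X, Multiset.singleton_add]
  -- part (c)
  have partc : (tq.roots.map (fun z => sq.eval z)).prod = (q : ℂ) - 1 := by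
    rw [htqroots, Multiset.map_cons, Multiset.prod_cons]
    have h0 : sq.eval 0 = -1 := by rw [hsq]; simp [zero_pow hq0]
    have hmap : (S.roots.map (fun z => sq.eval z)).prod
        = (S.roots.map (fun z => z - 1)).prod := by
      congr 1; apply Multiset.map_congr rfl
      intro z hz
      rw [hsq]
      have : z ^ q = z := by
        have : z ^ q = z ^ (q - 1) * z := by
          rw [← pow_succ]; congr 1; omega
        rw [this, hroot1 z hz, one_mul]
      simp [this]
    rw [h0, hmap, hprodm1]; ring
  -- part (b)
  have partb : (tq.roots.map (fun z => (derivative tq).eval z)).prod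
      = -((q : ℂ) - 1) ^ (q - 3) := by
    have hder : derivative tq = S + X * derivative S := by
      rw [htqXS, derivative_mul, derivative_X, one_mul]
    have hd2 : S + (X - 1) * derivative S = C ((q - 1 : ℕ) : ℂ) * X ^ (q - 1 - 1) := by
      have h := congrArg derivative hgeom
      simp only [derivative_mul, derivative_sub, derivative_one, derivative_X,
        derivative_X_pow, sub_zero, one_mul] at h
      exact h
    have hq2 : q - 1 - 1 = q - 2 := by omega
    -- key identity at roots
    have hkey : ∀ z ∈ S.roots, (z - 1) * (derivative S).eval z = ((q : ℂ) - 1) * z ^ (q - 2) := by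
      intro z hz
      have hz0 : S.eval z = 0 := isRoot_of_mem_roots hz
      have h := congrArg (eval z) hd2
      simp [hz0, hq2, ← hqc] at h
      exact h
    rw [htqroots, Multiset.map_cons, Multiset.prod_cons, hder]
    have h0 : (S + X * derivative S).eval 0 = 1 := by
      simp [eval_add, eval_mul]
      have : S.eval 0 = S.coeff 0 := by simp [eval_zero, coeff_zero_eq_eval_zero]
      rw [this, hSc0]
    have hmap : (S.roots.map (fun z => (S + X * derivative S).eval z)).prod
        = (S.roots.map (fun z => z * (derivative S).eval z)).prod := by
      congr 1; apply Multiset.map_congr rfl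
      intro z hz
      have hz0 : S.eval z = 0 := isRoot_of_mem_roots hz
      simp [hz0]
    rw [h0, hmap, one_mul]
    set T := (S.roots.map (fun z => z * (derivative S).eval z)).prod with hT
    have hne : -((q : ℂ) - 1) ≠ 0 := by
      rw [hqc]
      exact neg_ne_zero.mpr (Nat.cast_ne_zero.mpr (show q - 1 ≠ 0 by omega))
    have hbig : -((q : ℂ) - 1) * T = ((q : ℂ) - 1) ^ (q - 2) := by
      rw [← hprodm1, hT, ← Multiset.prod_map_mul]
      have : (S.roots.map (fun z => (z - 1) * (z * (derivative S).eval z))).prod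
          = (S.roots.map (fun _ => (q : ℂ) - 1)).prod := by
        congr 1; apply Multiset.map_congr rfl
        intro z hz
        have h1 : (z - 1) * (z * (derivative S).eval z) = z * ((z - 1) * (derivative S).eval z) := by ring
        rw [h1, hkey z hz]
        have h2 : z * (((q : ℂ) - 1) * z ^ (q - 2)) = ((q : ℂ) - 1) * z ^ (q - 1) := by
          have h3 : z ^ (q - 1) = z ^ (q - 2) * z := by
            rw [← pow_succ]; congr 1; omega
          rw [h3]; ring
        rw [h2, hroot1 z hz, mul_one]
      rw [this, Multiset.map_const', Multiset.prod_replicate, hScard]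
    apply mul_left_cancel₀ hne
    rw [hbig]
    have : -((q : ℂ) - 1) * -((q : ℂ) - 1) ^ (q - 3) = ((q : ℂ) - 1) ^ (q - 3) * ((q : ℂ) - 1) := by ring
    rw [this, ← pow_succ]
    congr 1
    omega
  exact ⟨parta, partb, partc⟩
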